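/- Let D be a real Hilbert space and let T̃ : D → D be a continuous ℝ-linear operator that is firmly nonexpansive. Let λ ∈ (0,2) be a constant, let w0 ∈ D, and define w_{k+1} := (1 − λ)·w_k + λ·T̃(w_k). Then Fix T̃ = ker(T̃ − Id) is a closed linear subspace of D, and (w_k) converges strongly (in norm) to the orthogonal projection of w0 onto Fix T̃. -/

import Mathlib

open scoped RealInnerProductSpace
open Filter

set_option maxHeartbeats 1000000

/-- If `T̃` is a continuous linear firmly nonexpansive operator on a real Hilbert space and
`λ ∈ (0,2)`, then `Fix T̃ = ker (T̃ - Id)` is a closed subspace and the relaxed iterates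
`w_{k+1} = (1-λ) w_k + λ T̃ w_k` converge strongly to the orthogonal projection of `w0`
onto `Fix T̃`. -/
theorem stmt_9
    {D : Type*} [NormedAddCommGroup D] [InnerProductSpace ℝ D] [CompleteSpace D]
    (T : D →L[ℝ] D)
    (hfne : ∀ v w : D, ‖T v - T w‖ ^ 2 ≤ ⟪v - w, T v - T w⟫)
    (lam : ℝ) (hlam : lam ∈ Set.Ioo (0 : ℝ) 2)
    (w0 : D) (w : ℕ → D) (hw0 : w 0 = w0)
    (hrec : ∀ k, w (k + 1) = (1 - lam) • w k + lam • T (w k)) :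
    {x : D | T x = x} = (LinearMap.ker ((T - ContinuousLinearMap.id ℝ D : D →L[ℝ] D) : D →ₗ[ℝ] D) : Set D) ∧
      IsClosed ((LinearMap.ker ((T - ContinuousLinearMap.id ℝ D : D →L[ℝ] D) : D →ₗ[ℝ] D) : Submodule ℝ D) : Set D) ∧
      Filter.Tendsto w Filter.atTop
        (nhds (Submodule.orthogonalProjectionOnto (LinearMap.ker ((T - ContinuousLinearMap.id ℝ D : D →L[ℝ] D) : D →ₗ[ℝ] D)) w0 : D)) := by
  obtain ⟨hl0, hl2⟩ := hlam
  set A : D →L[ℝ] D := T - ContinuousLinearMap.id ℝ D with hA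
  have hAapply : ∀ x, A x = T x - x := fun x => rfl
  set N : Submodule ℝ D := LinearMap.ker (A : D →ₗ[ℝ] D) with hN
  have hmemN : ∀ x, x ∈ N ↔ T x = x := by
    intro x
    simp [hN, LinearMap.mem_ker, hAapply, sub_eq_zero]
  -- firm nonexpansiveness at 0
  have hfne0 : ∀ v, ‖T v‖ ^ 2 ≤ ⟪v, T v⟫ := by
    intro v
    simpa using hfne v 0
  -- T is nonexpansive
  have hT1 : ∀ v, ‖T v‖ ≤ ‖v‖ := by
    intro v
    have h1 := hfne0 v
    have h2 : ⟪v, T v⟫ ≤ ‖v‖ * ‖T v‖ := real_inner_le_norm v (T v)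
    nlinarith [norm_nonneg (T v), norm_nonneg v]
  -- the relaxed operator
  set S : D →L[ℝ] D := (1 - lam) • ContinuousLinearMap.id ℝ D + lam • T with hS
  have hSapply : ∀ v, S v = (1 - lam) • v + lam • T v := fun v => rfl
  have hSapply' : ∀ v, S v = v + lam • (T v - v) := by
    intro v
    rw [hSapply]
    module
  -- key inequality
  have hkey : ∀ v, ‖S v‖ ^ 2 ≤ ‖v‖ ^ 2 - lam * (2 - lam) * ‖T v - v‖ ^ 2 := by
    intro v
    have h1 : ‖S v‖ ^ 2 = ‖v‖ ^ 2 + 2 * (lam * ⟪v, T v - v⟫) + lam ^ 2 * ‖T v - v‖ ^ 2 := by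
      rw [hSapply', norm_add_sq_real, real_inner_smul_right, norm_smul]
      simp [mul_pow, sq_abs]
    have h2 : ⟪v, T v - v⟫ = ⟪v, T v⟫ - ‖v‖ ^ 2 := by
      rw [inner_sub_right, real_inner_self_eq_norm_sq]
    have h3 : ‖T v - v‖ ^ 2 = ‖T v‖ ^ 2 - 2 * ⟪v, T v⟫ + ‖v‖ ^ 2 := by
      rw [norm_sub_sq_real, real_inner_comm]
    have h4 : 0 ≤ lam * (⟪v, T v⟫ - ‖T v‖ ^ 2) := mul_nonneg hl0.le (by linarith [hfne0 v])
    nlinarith [h4, h1, h2, h3]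
  have hc : 0 < lam * (2 - lam) := mul_pos hl0 (by linarith)
  have hSle : ∀ v, ‖S v‖ ≤ ‖v‖ := by
    intro v
    have h1 := hkey v
    have h2 : 0 ≤ lam * (2 - lam) * ‖T v - v‖ ^ 2 := mul_nonneg hc.le (sq_nonneg _)
    nlinarith [norm_nonneg (S v), norm_nonneg v]
  have hSnle : ∀ (n : ℕ) (x : D), ‖(S ^ n) x‖ ≤ ‖x‖ := by
    intro n
    induction n with
    | zero => intro x; simp
    | succ n ih =>
      intro x
      rw [pow_succ', ContinuousLinearMap.mul_apply]
      exact le_trans (hSle _) (ih x)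
  -- iterates
  have hwn : ∀ n, w n = (S ^ n) w0 := by
    intro n
    induction n with
    | zero => simpa using hw0
    | succ n ih =>
      rw [hrec n, ih, pow_succ', ContinuousLinearMap.mul_apply, hSapply]
  -- S commutes with T, hence with A
  have hST : ∀ x, S (T x) = T (S x) := by
    intro x
    rw [hSapply, hSapply, map_add, map_smul, map_smul]
  have hSnT : ∀ (n : ℕ) (x : D), (S ^ n) (T x) = T ((S ^ n) x) := by
    intro n
    induction n with
    | zero => intro x; simp
    | succ n ih =>
      intro x
      rw [pow_succ', ContinuousLinearMap.mul_apply, ContinuousLinearMap.mul_apply, ih]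
      exact hST _
  have hSnA : ∀ (n : ℕ) (x : D), (S ^ n) (A x) = A ((S ^ n) x) := by
    intro n x
    rw [hAapply, map_sub, hSnT, hAapply]
  -- the residual tends to zero along the orbit of any point
  have hres : ∀ u : D, Tendsto (fun n => A ((S ^ n) u)) atTop (nhds 0) := by
    intro u
    set a : ℕ → ℝ := fun n => ‖(S ^ n) u‖ ^ 2 with ha
    have hstep : ∀ n, a (n + 1) ≤ a n - lam * (2 - lam) * ‖A ((S ^ n) u)‖ ^ 2 := by
      intro n
      have := hkey ((S ^ n) u)
      rw [← hAapply] at this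
      show ‖(S ^ (n + 1)) u‖ ^ 2 ≤ ‖(S ^ n) u‖ ^ 2 - lam * (2 - lam) * ‖A ((S ^ n) u)‖ ^ 2
      rw [pow_succ' S n, ContinuousLinearMap.mul_apply]
      exact this
    have hantia : Antitone a := by
      refine antitone_nat_of_succ_le fun n => ?_
      have := hstep n
      nlinarith [mul_nonneg hc.le (sq_nonneg ‖A ((S ^ n) u)‖)]
    have hbdd : BddBelow (Set.range a) := ⟨0, by rintro x ⟨n, rfl⟩; positivity⟩
    have hconv : Tendsto a atTop (nhds (⨅ n, a n)) := tendsto_atTop_ciInf hantia hbdd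
    have hconv' : Tendsto (fun n => a (n + 1)) atTop (nhds (⨅ n, a n)) :=
      hconv.comp (tendsto_add_atTop_nat 1)
    have hdiff : Tendsto (fun n => a n - a (n + 1)) atTop (nhds 0) := by
      simpa using hconv.sub hconv'
    have hsq : Tendsto (fun n => ‖A ((S ^ n) u)‖ ^ 2) atTop (nhds 0) := by
      have hub : ∀ n, ‖A ((S ^ n) u)‖ ^ 2 ≤ (a n - a (n + 1)) / (lam * (2 - lam)) := by
        intro n
        rw [le_div_iff₀ hc]
        nlinarith [hstep n]
      have h0 : ∀ n, (0 : ℝ) ≤ ‖A ((S ^ n) u)‖ ^ 2 := fun n => sq_nonneg _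
      have hd := hdiff.div_const (lam * (2 - lam))
      simpa using squeeze_zero h0 hub (by simpa using hd)
    have hnorm : Tendsto (fun n => ‖A ((S ^ n) u)‖) atTop (nhds 0) := by
      have := hsq.sqrt
      simpa [Real.sqrt_sq (norm_nonneg _)] using this
    exact tendsto_zero_iff_norm_tendsto_zero.mpr hnorm
  -- orbit tends to zero on the closure of the range of A
  have hclos : ∀ q ∈ closure ((LinearMap.range (A : D →ₗ[ℝ] D) : Submodule ℝ D) : Set D),
      Tendsto (fun n => (S ^ n) q) atTop (nhds 0) := by
    intro q hq
    rw [NormedAddCommGroup.tendsto_nhds_zero]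
    intro ε hε
    obtain ⟨q', hq', hdist⟩ := Metric.mem_closure_iff.mp hq (ε / 2) (by linarith)
    obtain ⟨u, rfl⟩ := hq'
    have h1 : ∀ᶠ n in atTop, ‖(S ^ n) (A u)‖ < ε / 2 := by
      have hh := hres u
      rw [tendsto_zero_iff_norm_tendsto_zero] at hh
      have h2 : ∀ᶠ n in atTop, ‖A ((S ^ n) u)‖ < ε / 2 :=
        hh.eventually (eventually_lt_nhds (by linarith : (0:ℝ) < ε / 2))
      filter_upwards [h2] with n hn
      rwa [hSnA]
    filter_upwards [h1] with n hn
    have h3 : (S ^ n) q = (S ^ n) (q - A u) + (S ^ n) (A u) := by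
      rw [← map_add]
      congr 1
      abel
    calc ‖(S ^ n) q‖ ≤ ‖(S ^ n) (q - A u)‖ + ‖(S ^ n) (A u)‖ := by
          rw [h3]; exact norm_add_le _ _
      _ ≤ ‖q - A u‖ + ‖(S ^ n) (A u)‖ := by
          have := hSnle n (q - A u); linarith
      _ < ε / 2 + ε / 2 := by
          rw [dist_eq_norm] at hdist
          change ‖q - A u‖ < ε / 2 at hdist
          linarith
      _ = ε := by ring
  -- adjoint facts
  have hTd1 : ∀ v, ‖(ContinuousLinearMap.adjoint T) v‖ ≤ ‖v‖ := by
    intro v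
    have hTnorm : ‖T‖ ≤ 1 := T.opNorm_le_bound zero_le_one (by intro x; simpa using hT1 x)
    have hTdn : ‖ContinuousLinearMap.adjoint T‖ = ‖T‖ :=
      LinearIsometryEquiv.norm_map _ T
    calc ‖(ContinuousLinearMap.adjoint T) v‖ ≤ ‖ContinuousLinearMap.adjoint T‖ * ‖v‖ :=
          (ContinuousLinearMap.adjoint T).le_opNorm v
      _ ≤ 1 * ‖v‖ := by
          rw [hTdn]
          exact mul_le_mul_of_nonneg_right hTnorm (norm_nonneg v)
      _ = ‖v‖ := one_mul _
  have hfix1 : ∀ x, T x = x → (ContinuousLinearMap.adjoint T) x = x := by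
    intro x hx
    have h1 : ⟪(ContinuousLinearMap.adjoint T) x, x⟫ = ‖x‖ ^ 2 := by
      rw [ContinuousLinearMap.adjoint_inner_left, hx, real_inner_self_eq_norm_sq]
    have h2 : ‖(ContinuousLinearMap.adjoint T) x - x‖ ^ 2 ≤ 0 := by
      rw [norm_sub_sq_real, h1]
      nlinarith [hTd1 x, norm_nonneg x, norm_nonneg ((ContinuousLinearMap.adjoint T) x)]
    have hnn : ‖(ContinuousLinearMap.adjoint T) x - x‖ = 0 := by
      nlinarith [norm_nonneg ((ContinuousLinearMap.adjoint T) x - x)]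
    exact sub_eq_zero.mp (norm_eq_zero.mp hnn)
  have hfix2 : ∀ x, (ContinuousLinearMap.adjoint T) x = x → T x = x := by
    intro x hx
    have h1 : ⟪T x, x⟫ = ‖x‖ ^ 2 := by
      rw [← ContinuousLinearMap.adjoint_inner_right, hx, real_inner_self_eq_norm_sq]
    have h2 : ‖T x - x‖ ^ 2 ≤ 0 := by
      rw [norm_sub_sq_real, h1]
      nlinarith [hT1 x, norm_nonneg x, norm_nonneg (T x)]
    have hnn : ‖T x - x‖ = 0 := by
      nlinarith [norm_nonneg (T x - x)]
    exact sub_eq_zero.mp (norm_eq_zero.mp hnn)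
  -- orthogonal complement of N is the closure of the range of A
  have horthN : Nᗮ = (LinearMap.range (A : D →ₗ[ℝ] D)).topologicalClosure := by
    have h1 : N = (LinearMap.range (A : D →ₗ[ℝ] D))ᗮ := by
      ext x
      rw [Submodule.mem_orthogonal]
      constructor
      · intro hx u hu
        obtain ⟨y, rfl⟩ := hu
        have hTx := (hmemN x).mp hx
        have hTdx := hfix1 x hTx
        rw [ContinuousLinearMap.coe_coe, hAapply, inner_sub_left]
        have hy : ⟪T y, x⟫ = ⟪y, (ContinuousLinearMap.adjoint T) x⟫ :=
          (ContinuousLinearMap.adjoint_inner_right T y x).symm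
        rw [hy, hTdx, sub_self]
      · intro hx
        rw [hmemN]
        apply hfix2
        have hz : ∀ y : D, ⟪y, (ContinuousLinearMap.adjoint T) x - x⟫ = 0 := by
          intro y
          have h5 := hx (A y) ⟨y, rfl⟩
          rw [hAapply, inner_sub_left] at h5
          have hy : ⟪T y, x⟫ = ⟪y, (ContinuousLinearMap.adjoint T) x⟫ :=
            (ContinuousLinearMap.adjoint_inner_right T y x).symm
          rw [inner_sub_right, ← hy]
          linarith
        have h6 := hz ((ContinuousLinearMap.adjoint T) x - x)
        rw [inner_self_eq_zero] at h6
        exact sub_eq_zero.mp h6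
    rw [h1, Submodule.orthogonal_orthogonal_eq_closure]
  refine ⟨?_, ?_, ?_⟩
  · ext x
    exact (hmemN x).symm
  · exact ContinuousLinearMap.isClosed_ker A
  · set p : D := (Submodule.orthogonalProjectionOnto N w0 : D) with hp
    have hpN : p ∈ N := SetLike.coe_mem _
    have hTp : T p = p := (hmemN p).mp hpN
    have hSp : S p = p := by rw [hSapply', hTp, sub_self, smul_zero, add_zero]
    have hSnp : ∀ n, (S ^ n) p = p := by
      intro n
      induction n with
      | zero => simp
      | succ n ih => rw [pow_succ', ContinuousLinearMap.mul_apply, ih, hSp]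
    have hqmem : w0 - p ∈ Nᗮ := Submodule.sub_starProjection_mem_orthogonal (K := N) w0
    have hqclos : w0 - p ∈ closure ((LinearMap.range (A : D →ₗ[ℝ] D) : Submodule ℝ D) : Set D) := by
      rw [← Submodule.topologicalClosure_coe]
      rw [horthN] at hqmem
      exact hqmem
    have hq0 := hclos _ hqclos
    have hwp : ∀ n, w n = p + (S ^ n) (w0 - p) := by
      intro n
      rw [hwn n, map_sub, hSnp]
      abel
    have hfin : Tendsto w atTop (nhds (p + 0)) := by
      simp only [funext hwp]
      exact tendsto_const_nhds.add hq0
    simpa using hfin
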